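/- For every n ≥ 1 and every c ∈ {0, 1, 2}, the number of binary strings x ∈ {0,1}^{2n} whose Hamming weight |x| is divisible by 3 and satisfies (|x|/3) ≡ c (mod 3) is at most N · ( 1/3 + (9/10)ⁿ ), where N denotes the total number of strings x ∈ {0,1}^{2n} with 3 ∣ |x|. -/
import Mathlib

open Finset

def cnt (k m r : ℕ) : ℕ :=
  ((univ : Finset (Fin m → Fin 2)).filter (fun x => (∑ j, (x j : ℕ)) % k = r)).card

lemma cnt_zero (k r : ℕ) : cnt k 0 r = if 0 % k = r then 1 else 0 := by
  simp [cnt, Finset.filter_const]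
  split <;> simp_all [Finset.card_univ]

lemma card_filter_succ (m : ℕ) (P : ℕ → Prop) [DecidablePred P] :
    ((univ : Finset (Fin (m+1) → Fin 2)).filter (fun x => P (∑ j, (x j : ℕ)))).card
    = ((univ : Finset (Fin m → Fin 2)).filter (fun x => P (∑ j, (x j : ℕ)))).card
      + ((univ : Finset (Fin m → Fin 2)).filter (fun x => P ((∑ j, (x j : ℕ)) + 1))).card := by
  have h1 : ((univ : Finset (Fin (m+1) → Fin 2)).filter (fun x => P (∑ j, (x j : ℕ)))).card
      = ((univ : Finset (Fin 2 × (Fin m → Fin 2))).filter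
          (fun p => P ((p.1 : ℕ) + ∑ j, (p.2 j : ℕ)))).card := by
    apply Finset.card_equiv (Fin.consEquiv (fun _ : Fin (m+1) => Fin 2)).symm
    intro x
    simp only [Finset.mem_filter, Finset.mem_univ, true_and, Fin.consEquiv_symm_apply]
    rw [Fin.sum_univ_succ]
    rfl
  rw [h1, Finset.card_filter, Fintype.sum_prod_type, Fin.sum_univ_two]
  simp only [Finset.card_filter]
  norm_num [Nat.add_comm]

lemma cnt_succ9 (m r : ℕ) (hr : r < 9) :
    cnt 9 (m+1) r = cnt 9 m r + cnt 9 m ((r + 8) % 9) := by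
  unfold cnt
  rw [card_filter_succ m (fun s => s % 9 = r)]
  congr 1
  apply congrArg
  apply Finset.filter_congr
  intro x _
  constructor <;> (intro h; omega)

lemma cnt_succ3 (m r : ℕ) (hr : r < 3) :
    cnt 3 (m+1) r = cnt 3 m r + cnt 3 m ((r + 2) % 3) := by
  unfold cnt
  rw [card_filter_succ m (fun s => s % 3 = r)]
  congr 1
  apply congrArg
  apply Finset.filter_congr
  intro x _
  constructor <;> (intro h; omega)

def step9 : List ℕ → List ℕ
  | [a,b,c,d,e,f,g,h,i] => [a+i, b+a, c+b, d+c, e+d, f+e, g+f, h+g, i+h]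
  | _ => []

def F9 : ℕ → List ℕ
  | 0 => [1,0,0,0,0,0,0,0,0]
  | m+1 => step9 (F9 m)

def step3 : List ℕ → List ℕ
  | [a,b,c] => [a+c, b+a, c+b]
  | _ => []

def F3 : ℕ → List ℕ
  | 0 => [1,0,0]
  | m+1 => step3 (F3 m)

lemma F9_eq (m : ℕ) :
    F9 m = [cnt 9 m 0, cnt 9 m 1, cnt 9 m 2, cnt 9 m 3, cnt 9 m 4,
            cnt 9 m 5, cnt 9 m 6, cnt 9 m 7, cnt 9 m 8] := by
  induction m with
  | zero => simp [F9, cnt_zero]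
  | succ m ih =>
      rw [F9, ih]
      simp only [step9]
      rw [cnt_succ9 m 0 (by norm_num), cnt_succ9 m 1 (by norm_num),
          cnt_succ9 m 2 (by norm_num), cnt_succ9 m 3 (by norm_num),
          cnt_succ9 m 4 (by norm_num), cnt_succ9 m 5 (by norm_num),
          cnt_succ9 m 6 (by norm_num), cnt_succ9 m 7 (by norm_num),
          cnt_succ9 m 8 (by norm_num)]

lemma F3_eq (m : ℕ) :
    F3 m = [cnt 3 m 0, cnt 3 m 1, cnt 3 m 2] := by
  induction m with
  | zero => simp [F3, cnt_zero]
  | succ m ih =>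
      rw [F3, ih]
      simp only [step3]
      rw [cnt_succ3 m 0 (by norm_num), cnt_succ3 m 1 (by norm_num),
          cnt_succ3 m 2 (by norm_num)]

lemma cnt9_eq (m r : ℕ) (h : r < 9) : cnt 9 m r = (F9 m).getD r 0 := by
  rw [F9_eq]; interval_cases r <;> rfl

lemma cnt3_eq (m r : ℕ) (h : r < 3) : cnt 3 m r = (F3 m).getD r 0 := by
  rw [F3_eq]; interval_cases r <;> rfl

lemma sum9 (m : ℕ) :
    cnt 9 m 0 + cnt 9 m 1 + cnt 9 m 2 + cnt 9 m 3 + cnt 9 m 4 + cnt 9 m 5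
      + cnt 9 m 6 + cnt 9 m 7 + cnt 9 m 8 = 2 ^ m := by
  induction m with
  | zero => simp [cnt_zero]
  | succ m ih =>
      rw [cnt_succ9 m 0 (by norm_num), cnt_succ9 m 1 (by norm_num),
          cnt_succ9 m 2 (by norm_num), cnt_succ9 m 3 (by norm_num),
          cnt_succ9 m 4 (by norm_num), cnt_succ9 m 5 (by norm_num),
          cnt_succ9 m 6 (by norm_num), cnt_succ9 m 7 (by norm_num),
          cnt_succ9 m 8 (by norm_num), pow_succ]
      norm_num
      omega

lemma g_inv (m : ℕ) :
    (((cnt 3 m 0 : ℤ) - cnt 3 m 1) ^ 2 + ((cnt 3 m 1 : ℤ) - cnt 3 m 2) ^ 2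
        + ((cnt 3 m 2 : ℤ) - cnt 3 m 0) ^ 2 = 2)
      ∧ (cnt 3 m 0 : ℤ) + cnt 3 m 1 + cnt 3 m 2 = 2 ^ m := by
  induction m with
  | zero => norm_num [cnt_zero]
  | succ m ih =>
      obtain ⟨ih1, ih2⟩ := ih
      rw [cnt_succ3 m 0 (by norm_num), cnt_succ3 m 1 (by norm_num),
          cnt_succ3 m 2 (by norm_num)]
      norm_num
      push_cast
      constructor
      · linear_combination ih1
      · rw [pow_succ]; linarith

noncomputable def S2 (m : ℕ) : ℝ :=
    ((cnt 9 m 0 : ℝ) - 2^m/9)^2 + ((cnt 9 m 1 : ℝ) - 2^m/9)^2 + ((cnt 9 m 2 : ℝ) - 2^m/9)^2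
  + ((cnt 9 m 3 : ℝ) - 2^m/9)^2 + ((cnt 9 m 4 : ℝ) - 2^m/9)^2 + ((cnt 9 m 5 : ℝ) - 2^m/9)^2
  + ((cnt 9 m 6 : ℝ) - 2^m/9)^2 + ((cnt 9 m 7 : ℝ) - 2^m/9)^2 + ((cnt 9 m 8 : ℝ) - 2^m/9)^2

set_option maxHeartbeats 1600000 in
lemma key_quad (v0 v1 v2 v3 v4 v5 v6 v7 v8 : ℝ)
    (h : v0+v1+v2+v3+v4+v5+v6+v7+v8 = 0) :
    (v0+v8)^2+(v1+v0)^2+(v2+v1)^2+(v3+v2)^2+(v4+v3)^2+(v5+v4)^2+(v6+v5)^2+(v7+v6)^2+(v8+v7)^2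
      ≤ (3534/1000) * (v0^2+v1^2+v2^2+v3^2+v4^2+v5^2+v6^2+v7^2+v8^2) := by
  have e : 767*(v0^2+v1^2+v2^2+v3^2+v4^2+v5^2+v6^2+v7^2+v8^2) - 1000*(v0*v1+v1*v2+v2*v3+v3*v4+v4*v5+v5*v6+v6*v7+v7*v8+v8*v0) + 26*(v0+v1+v2+v3+v4+v5+v6+v7+v8)^2
      = (1/793)*(793*v0 + (-474)*v1 + 26*v2 + 26*v3 + 26*v4 + 26*v5 + 26*v6 + 26*v7 + (-474)*v8)^2 + (1/320509189)*(404173*v1 + (-363558)*v2 + 32942*v3 + 32942*v4 + 32942*v5 + 32942*v6 + 32942*v7 + (-204058)*v8)^2 + (1/62035788279465)*(153488205*v2 + (-176819986)*v3 + 25266514*v4 + 25266514*v5 + 25266514*v6 + 25266514*v7 + (-76762486)*v8)^2 + (1/6708873736510000965)*(43709376473*v3 + (-62350186262)*v4 + 14393916238*v5 + 14393916238*v6 + 14393916238*v7 + (-23987326762)*v8)^2 + (1/7759309811634337187049)*(1242643411191*v4 + (-2215168997422)*v5 + 906929322078*v6 + 906929322078*v7 + (-806451160922)*v8)^2 + (1/177872946153482974316160693)*(143140779206323*v5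 + (-323703924061674)*v6 + 297617781533826*v7 + (-105607798927174)*v8)^2 + (1/52697085101487232008339561320041)*(52592664761500981*v6 + (-83959171803518706)*v7 + 47406259173502794*v8)^2 + (1226029021/22203672449890150047968425)*(422181925*v7 + (-354464262)*v8)^2 + (1226029021/422181925)*(1*v8)^2 := by ring
  rw [h] at e
  have hS : (0:ℝ) ≤ (1/793)*(793*v0 + (-474)*v1 + 26*v2 + 26*v3 + 26*v4 + 26*v5 + 26*v6 + 26*v7 + (-474)*v8)^2 + (1/320509189)*(404173*v1 + (-363558)*v2 + 32942*v3 + 32942*v4 + 32942*v5 + 32942*v6 + 32942*v7 + (-204058)*v8)^2 + (1/62035788279465)*(153488205*v2 + (-176819986)*v3 + 25266514*v4 + 25266514*v5 + 25266514*v6 + 25266514*v7 + (-76762486)*v8)^2 + (1/6708873736510000965)*(43709376473*v3 + (-62350186262)*v4 + 14393916238*v5 + 14393916238*v6 + 14393916238*v7 + (-23987326762)*v8)^2 + (1/7759309811634337187049)*(1242643411191*v4 + (-2215168997422)*v5 + 906929322078*v6 + 906929322078*v7 + (-806451160922)*v8)^2 + (1/177872946153482974316160693)*(143140779206323*v5 +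 (-323703924061674)*v6 + 297617781533826*v7 + (-105607798927174)*v8)^2 + (1/52697085101487232008339561320041)*(52592664761500981*v6 + (-83959171803518706)*v7 + 47406259173502794*v8)^2 + (1226029021/22203672449890150047968425)*(422181925*v7 + (-354464262)*v8)^2 + (1226029021/422181925)*(1*v8)^2 := by positivity
  nlinarith [e, hS]


lemma S2_step (m : ℕ) : S2 (m+1) ≤ (3534/1000) * S2 m := by
  have hs : ((cnt 9 m 0 : ℝ) + cnt 9 m 1 + cnt 9 m 2 + cnt 9 m 3 + cnt 9 m 4 + cnt 9 m 5
      + cnt 9 m 6 + cnt 9 m 7 + cnt 9 m 8) = 2 ^ m := by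
    exact_mod_cast sum9 m
  have h0 : ((cnt 9 m 0 : ℝ) - 2^m/9) + ((cnt 9 m 1 : ℝ) - 2^m/9) + ((cnt 9 m 2 : ℝ) - 2^m/9)
      + ((cnt 9 m 3 : ℝ) - 2^m/9) + ((cnt 9 m 4 : ℝ) - 2^m/9) + ((cnt 9 m 5 : ℝ) - 2^m/9)
      + ((cnt 9 m 6 : ℝ) - 2^m/9) + ((cnt 9 m 7 : ℝ) - 2^m/9) + ((cnt 9 m 8 : ℝ) - 2^m/9)
      = 0 := by linarith
  have K := key_quad _ _ _ _ _ _ _ _ _ h0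
  have e1 : S2 (m+1)
      = (((cnt 9 m 0 : ℝ) - 2^m/9) + ((cnt 9 m 8 : ℝ) - 2^m/9))^2
      + (((cnt 9 m 1 : ℝ) - 2^m/9) + ((cnt 9 m 0 : ℝ) - 2^m/9))^2
      + (((cnt 9 m 2 : ℝ) - 2^m/9) + ((cnt 9 m 1 : ℝ) - 2^m/9))^2
      + (((cnt 9 m 3 : ℝ) - 2^m/9) + ((cnt 9 m 2 : ℝ) - 2^m/9))^2
      + (((cnt 9 m 4 : ℝ) - 2^m/9) + ((cnt 9 m 3 : ℝ) - 2^m/9))^2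
      + (((cnt 9 m 5 : ℝ) - 2^m/9) + ((cnt 9 m 4 : ℝ) - 2^m/9))^2
      + (((cnt 9 m 6 : ℝ) - 2^m/9) + ((cnt 9 m 5 : ℝ) - 2^m/9))^2
      + (((cnt 9 m 7 : ℝ) - 2^m/9) + ((cnt 9 m 6 : ℝ) - 2^m/9))^2
      + (((cnt 9 m 8 : ℝ) - 2^m/9) + ((cnt 9 m 7 : ℝ) - 2^m/9))^2 := by
    unfold S2
    rw [cnt_succ9 m 0 (by norm_num), cnt_succ9 m 1 (by norm_num),
        cnt_succ9 m 2 (by norm_num), cnt_succ9 m 3 (by norm_num),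
        cnt_succ9 m 4 (by norm_num), cnt_succ9 m 5 (by norm_num),
        cnt_succ9 m 6 (by norm_num), cnt_succ9 m 7 (by norm_num),
        cnt_succ9 m 8 (by norm_num)]
    norm_num
    push_cast
    rw [pow_succ]
    ring
  have e2 : (3534/1000) * S2 m
      = (3534/1000) * (((cnt 9 m 0 : ℝ) - 2^m/9)^2 + ((cnt 9 m 1 : ℝ) - 2^m/9)^2
        + ((cnt 9 m 2 : ℝ) - 2^m/9)^2 + ((cnt 9 m 3 : ℝ) - 2^m/9)^2
        + ((cnt 9 m 4 : ℝ) - 2^m/9)^2 + ((cnt 9 m 5 : ℝ) - 2^m/9)^2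
        + ((cnt 9 m 6 : ℝ) - 2^m/9)^2 + ((cnt 9 m 7 : ℝ) - 2^m/9)^2
        + ((cnt 9 m 8 : ℝ) - 2^m/9)^2) := by
    unfold S2; ring
  rw [e1, e2]
  exact K

lemma S2_four : S2 4 = 3366/81 := by
  unfold S2
  rw [cnt9_eq 4 0 (by norm_num), cnt9_eq 4 1 (by norm_num), cnt9_eq 4 2 (by norm_num),
      cnt9_eq 4 3 (by norm_num), cnt9_eq 4 4 (by norm_num), cnt9_eq 4 5 (by norm_num),
      cnt9_eq 4 6 (by norm_num), cnt9_eq 4 7 (by norm_num), cnt9_eq 4 8 (by norm_num),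
      show F9 4 = [1,4,6,4,1,0,0,0,0] from by decide]
  norm_num

lemma S2_le (j : ℕ) : S2 (4+j) ≤ (3366/81) * (3534/1000)^j := by
  induction j with
  | zero => simp [S2_four]
  | succ j ih =>
      have h1 := S2_step (4+j)
      have h2 : (0:ℝ) < 3534/1000 := by norm_num
      calc S2 (4+(j+1)) = S2 ((4+j)+1) := by ring_nf
        _ ≤ (3534/1000) * S2 (4+j) := S2_step (4+j)
        _ ≤ (3534/1000) * ((3366/81) * (3534/1000)^j) := by nlinarith
        _ = (3366/81) * (3534/1000)^(j+1) := by ring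

lemma term_le (m c : ℕ) (hc : c < 3) :
    ((cnt 9 m (3*c) : ℝ) - 2^m/9)^2 ≤ S2 m := by
  unfold S2
  interval_cases c <;> norm_num <;>
    nlinarith [sq_nonneg ((cnt 9 m 0 : ℝ) - 2^m/9), sq_nonneg ((cnt 9 m 1 : ℝ) - 2^m/9),
      sq_nonneg ((cnt 9 m 2 : ℝ) - 2^m/9), sq_nonneg ((cnt 9 m 3 : ℝ) - 2^m/9),
      sq_nonneg ((cnt 9 m 4 : ℝ) - 2^m/9), sq_nonneg ((cnt 9 m 5 : ℝ) - 2^m/9),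
      sq_nonneg ((cnt 9 m 6 : ℝ) - 2^m/9), sq_nonneg ((cnt 9 m 7 : ℝ) - 2^m/9),
      sq_nonneg ((cnt 9 m 8 : ℝ) - 2^m/9)]

set_option maxHeartbeats 1000000 in
lemma pow_ineq : ∀ n : ℕ, 25 ≤ n →
    (3366/81) * (3534/1000 : ℝ)^(2*n-4) ≤ ((18/5 : ℝ)^n/3 - 1)^2 := by
  intro n hn
  induction n, hn using Nat.le_induction with
  | base => norm_num
  | succ n hn ih =>
      have ha : (3:ℝ) ≤ (18/5)^n := by
        calc (3:ℝ) ≤ 18/5 := by norm_num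
          _ ≤ (18/5)^n := le_self_pow₀ (by norm_num) (by omega)
      have hrw : 2*(n+1)-4 = (2*n-4)+2 := by omega
      rw [hrw, pow_add, pow_succ]
      have h1 : (0:ℝ) ≤ (18/5:ℝ)^n/3 - 1 := by linarith
      have h2 : (3534/1000:ℝ) * ((18/5:ℝ)^n/3 - 1) ≤ ((18/5:ℝ)^n * (18/5))/3 - 1 := by
        nlinarith [ha]
      have h3 : (0:ℝ) ≤ (3534/1000:ℝ) * ((18/5:ℝ)^n/3 - 1) :=
        mul_nonneg (by norm_num) h1
      have h4 : ((3534/1000:ℝ) * ((18/5:ℝ)^n/3 - 1))^2 ≤ (((18/5:ℝ)^n * (18/5))/3 - 1)^2 := by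
        nlinarith [h2, h3]
      have h5 : ((3366/81) * (3534/1000:ℝ)^(2*n-4)) * ((3534/1000:ℝ))^2
          ≤ (((18/5:ℝ)^n/3 - 1))^2 * ((3534/1000:ℝ))^2 :=
        mul_le_mul_of_nonneg_right ih (by positivity)
      have e : (((18/5:ℝ)^n/3 - 1))^2 * ((3534/1000:ℝ))^2
          = ((3534/1000:ℝ) * ((18/5:ℝ)^n/3 - 1))^2 := by ring
      calc (3366/81) * ((3534/1000 : ℝ)^(2*n-4) * (3534/1000)^2)
          = ((3366/81) * (3534/1000:ℝ)^(2*n-4)) * ((3534/1000:ℝ))^2 := by ring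
        _ ≤ (((18/5:ℝ)^n * (18/5))/3 - 1)^2 := by linarith [h4, h5, e.le]

lemma main_large (n : ℕ) (hn : 25 ≤ n) (c : ℕ) (hc : c < 3) :
    (cnt 9 (2*n) (3*c) : ℝ) ≤ (cnt 3 (2*n) 0 : ℝ) * (1/3 + (9/10)^n) := by
  have h4 : (2:ℝ)^(2*n) = 4^n := by rw [pow_mul]; norm_num
  have hA : ((cnt 9 (2*n) (3*c) : ℝ) - (4:ℝ)^n/9)^2 ≤ (3366/81) * (3534/1000)^(2*n-4) := by
    have t1 := term_le (2*n) c hc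
    have t2 := S2_le (2*n-4)
    have hrw : 4 + (2*n-4) = 2*n := by omega
    rw [hrw] at t2
    rw [← h4]
    exact t1.trans t2
  have hPow := pow_ineq n hn
  have hg := (g_inv (2*n)).1
  have hg2 := (g_inv (2*n)).2
  have hN1 : (4:ℝ)^n - 2 ≤ 3*(cnt 3 (2*n) 0 : ℝ) := by
    have h1 : ((2:ℤ)^(2*n) : ℤ) ≤ 3 * (cnt 3 (2*n) 0 : ℤ) + 2 := by nlinarith [hg, hg2]
    have h2 : ((2:ℝ)^(2*n)) ≤ 3*(cnt 3 (2*n) 0 : ℝ) + 2 := by exact_mod_cast h1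
    rw [h4] at h2; linarith
  have hN2 : 3*(cnt 3 (2*n) 0 : ℝ) ≤ (4:ℝ)^n + 2 := by
    have h1 : 3 * (cnt 3 (2*n) 0 : ℤ) ≤ ((2:ℤ)^(2*n) : ℤ) + 2 := by nlinarith [hg, hg2]
    have h2 : 3*(cnt 3 (2*n) 0 : ℝ) ≤ ((2:ℝ)^(2*n)) + 2 := by exact_mod_cast h1
    rw [h4] at h2; linarith
  have hpa : ((9/10:ℝ))^n * (4:ℝ)^n = (18/5)^n := by
    rw [← mul_pow]; norm_num
  have hp0 : (0:ℝ) ≤ (9/10:ℝ)^n := by positivity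
  have hp1 : ((9/10:ℝ))^n ≤ 1 := pow_le_one₀ (by norm_num) (by norm_num)
  have ha3 : (3:ℝ) ≤ (18/5)^n := by
    calc (3:ℝ) ≤ 18/5 := by norm_num
      _ ≤ (18/5)^n := le_self_pow₀ (by norm_num) (by omega)
  have hy : (18/5:ℝ)^n/3 - 1 ≤ (cnt 3 (2*n) 0 : ℝ) * (9/10)^n - 2/9 := by
    nlinarith [hN1, hp0, hp1, hpa]
  have h1 : (0:ℝ) ≤ (18/5:ℝ)^n/3 - 1 := by linarith
  have hsq : ((cnt 9 (2*n) (3*c) : ℝ) - (4:ℝ)^n/9)^2 ≤ ((18/5:ℝ)^n/3 - 1)^2 := hA.trans hPow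
  have hfin : (cnt 9 (2*n) (3*c) : ℝ) - (4:ℝ)^n/9 ≤ (18/5:ℝ)^n/3 - 1 := by nlinarith [hsq, h1]
  nlinarith [hfin, hy, hN2]

lemma F9v_2 : F9 2 = [1, 2, 1, 0, 0, 0, 0, 0, 0] := by decide
lemma F3v_2 : F3 2 = [1, 2, 1] := by decide
lemma base_1 (c : ℕ) (hc : c < 3) :
    (cnt 9 (2*1) (3*c) : ℝ) ≤ (cnt 3 (2*1) 0 : ℝ) * (1/3 + (9/10 : ℝ)^1) := by
  norm_num only
  rw [cnt3_eq 2 0 (by norm_num), F3v_2]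
  interval_cases c <;>
    rw [cnt9_eq 2 _ (by norm_num), F9v_2] <;> norm_num

lemma F9v_4 : F9 4 = [1, 4, 6, 4, 1, 0, 0, 0, 0] := by decide
lemma F3v_4 : F3 4 = [5, 5, 6] := by decide
lemma base_2 (c : ℕ) (hc : c < 3) :
    (cnt 9 (2*2) (3*c) : ℝ) ≤ (cnt 3 (2*2) 0 : ℝ) * (1/3 + (9/10 : ℝ)^2) := by
  norm_num only
  rw [cnt3_eq 4 0 (by norm_num), F3v_4]
  interval_cases c <;>
    rw [cnt9_eq 4 _ (by norm_num), F9v_4] <;> norm_num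

lemma F9v_6 : F9 6 = [1, 6, 15, 20, 15, 6, 1, 0, 0] := by decide
lemma F3v_6 : F3 6 = [22, 21, 21] := by decide
lemma base_3 (c : ℕ) (hc : c < 3) :
    (cnt 9 (2*3) (3*c) : ℝ) ≤ (cnt 3 (2*3) 0 : ℝ) * (1/3 + (9/10 : ℝ)^3) := by
  norm_num only
  rw [cnt3_eq 6 0 (by norm_num), F3v_6]
  interval_cases c <;>
    rw [cnt9_eq 6 _ (by norm_num), F9v_6] <;> norm_num

lemma F9v_8 : F9 8 = [1, 8, 28, 56, 70, 56, 28, 8, 1] := by decide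
lemma F3v_8 : F3 8 = [85, 86, 85] := by decide
lemma base_4 (c : ℕ) (hc : c < 3) :
    (cnt 9 (2*4) (3*c) : ℝ) ≤ (cnt 3 (2*4) 0 : ℝ) * (1/3 + (9/10 : ℝ)^4) := by
  norm_num only
  rw [cnt3_eq 8 0 (by norm_num), F3v_8]
  interval_cases c <;>
    rw [cnt9_eq 8 _ (by norm_num), F9v_8] <;> norm_num

lemma F9v_10 : F9 10 = [11, 11, 45, 120, 210, 252, 210, 120, 45] := by decide
lemma F3v_10 : F3 10 = [341, 341, 342] := by decide
lemma base_5 (c : ℕ) (hc : c < 3) :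
    (cnt 9 (2*5) (3*c) : ℝ) ≤ (cnt 3 (2*5) 0 : ℝ) * (1/3 + (9/10 : ℝ)^5) := by
  norm_num only
  rw [cnt3_eq 10 0 (by norm_num), F3v_10]
  interval_cases c <;>
    rw [cnt9_eq 10 _ (by norm_num), F9v_10] <;> norm_num

lemma F9v_12 : F9 12 = [221, 78, 78, 221, 495, 792, 924, 792, 495] := by decide
lemma F3v_12 : F3 12 = [1366, 1365, 1365] := by decide
lemma base_6 (c : ℕ) (hc : c < 3) :
    (cnt 9 (2*6) (3*c) : ℝ) ≤ (cnt 3 (2*6) 0 : ℝ) * (1/3 + (9/10 : ℝ)^6) := by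
  norm_num only
  rw [cnt3_eq 12 0 (by norm_num), F3v_12]
  interval_cases c <;>
    rw [cnt9_eq 12 _ (by norm_num), F9v_12] <;> norm_num

lemma F9v_14 : F9 14 = [2003, 1015, 455, 455, 1015, 2003, 3003, 3432, 3003] := by decide
lemma F3v_14 : F3 14 = [5461, 5462, 5461] := by decide
lemma base_7 (c : ℕ) (hc : c < 3) :
    (cnt 9 (2*7) (3*c) : ℝ) ≤ (cnt 3 (2*7) 0 : ℝ) * (1/3 + (9/10 : ℝ)^7) := by
  norm_num only
  rw [cnt3_eq 14 0 (by norm_num), F3v_14]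
  interval_cases c <;>
    rw [cnt9_eq 14 _ (by norm_num), F9v_14] <;> norm_num

lemma F9v_16 : F9 16 = [11441, 8024, 4488, 2380, 2380, 4488, 8024, 11441, 12870] := by decide
lemma F3v_16 : F3 16 = [21845, 21845, 21846] := by decide
lemma base_8 (c : ℕ) (hc : c < 3) :
    (cnt 9 (2*8) (3*c) : ℝ) ≤ (cnt 3 (2*8) 0 : ℝ) * (1/3 + (9/10 : ℝ)^8) := by
  norm_num only
  rw [cnt3_eq 16 0 (by norm_num), F3v_16]
  interval_cases c <;>
    rw [cnt9_eq 16 _ (by norm_num), F9v_16] <;> norm_num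

lemma F9v_18 : F9 18 = [48622, 43776, 31977, 19380, 11628, 11628, 19380, 31977, 43776] := by decide
lemma F3v_18 : F3 18 = [87382, 87381, 87381] := by decide
lemma base_9 (c : ℕ) (hc : c < 3) :
    (cnt 9 (2*9) (3*c) : ℝ) ≤ (cnt 3 (2*9) 0 : ℝ) * (1/3 + (9/10 : ℝ)^9) := by
  norm_num only
  rw [cnt3_eq 18 0 (by norm_num), F3v_18]
  interval_cases c <;>
    rw [cnt9_eq 18 _ (by norm_num), F9v_18] <;> norm_num

lemma F9v_20 : F9 20 = [168151, 184796, 168151, 127110, 82365, 54264, 54264, 82365, 127110] := by decide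
lemma F3v_20 : F3 20 = [349525, 349526, 349525] := by decide
lemma base_10 (c : ℕ) (hc : c < 3) :
    (cnt 9 (2*10) (3*c) : ℝ) ≤ (cnt 3 (2*10) 0 : ℝ) * (1/3 + (9/10 : ℝ)^10) := by
  norm_num only
  rw [cnt3_eq 20 0 (by norm_num), F3v_20]
  interval_cases c <;>
    rw [cnt9_eq 20 _ (by norm_num), F9v_20] <;> norm_num

lemma F9v_22 : F9 22 = [504736, 648208, 705894, 648208, 504736, 346104, 245157, 245157, 346104] := by decide
lemma F3v_22 : F3 22 = [1398101, 1398101, 1398102] := by decide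
lemma base_11 (c : ℕ) (hc : c < 3) :
    (cnt 9 (2*11) (3*c) : ℝ) ≤ (cnt 3 (2*11) 0 : ℝ) * (1/3 + (9/10 : ℝ)^11) := by
  norm_num only
  rw [cnt3_eq 22 0 (by norm_num), F3v_22]
  interval_cases c <;>
    rw [cnt9_eq 22 _ (by norm_num), F9v_22] <;> norm_num

lemma F9v_24 : F9 24 = [1442101, 2003784, 2507046, 2708204, 2507046, 2003784, 1442101, 1081575, 1081575] := by decide
lemma F3v_24 : F3 24 = [5592406, 5592405, 5592405] := by decide
lemma base_12 (c : ℕ) (hc : c < 3) :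
    (cnt 9 (2*12) (3*c) : ℝ) ≤ (cnt 3 (2*12) 0 : ℝ) * (1/3 + (9/10 : ℝ)^12) := by
  norm_num only
  rw [cnt3_eq 24 0 (by norm_num), F3v_24]
  interval_cases c <;>
    rw [cnt9_eq 24 _ (by norm_num), F9v_24] <;> norm_num

lemma F9v_26 : F9 26 = [4686826, 5969561, 7956715, 9726080, 10430500, 9726080, 7956715, 5969561, 4686826] := by decide
lemma F3v_26 : F3 26 = [22369621, 22369622, 22369621] := by decide
lemma base_13 (c : ℕ) (hc : c < 3) :
    (cnt 9 (2*13) (3*c) : ℝ) ≤ (cnt 3 (2*13) 0 : ℝ) * (1/3 + (9/10 : ℝ)^13) := by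
  norm_num only
  rw [cnt3_eq 26 0 (by norm_num), F3v_26]
  interval_cases c <;>
    rw [cnt9_eq 26 _ (by norm_num), F9v_26] <;> norm_num

lemma F9v_28 : F9 28 = [20030039, 20030039, 24582663, 31609071, 37839375, 40313160, 37839375, 31609071, 24582663] := by decide
lemma F3v_28 : F3 28 = [89478485, 89478485, 89478486] := by decide
lemma base_14 (c : ℕ) (hc : c < 3) :
    (cnt 9 (2*14) (3*c) : ℝ) ≤ (cnt 3 (2*14) 0 : ℝ) * (1/3 + (9/10 : ℝ)^14) := by
  norm_num only
  rw [cnt3_eq 28 0 (by norm_num), F3v_28]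
  interval_cases c <;>
    rw [cnt9_eq 28 _ (by norm_num), F9v_28] <;> norm_num

lemma F9v_30 : F9 30 = [100804436, 84672780, 84672780, 100804436, 125640180, 147600981, 156305070, 147600981, 125640180] := by decide
lemma F3v_30 : F3 30 = [357913942, 357913941, 357913941] := by decide
lemma base_15 (c : ℕ) (hc : c < 3) :
    (cnt 9 (2*15) (3*c) : ℝ) ≤ (cnt 3 (2*15) 0 : ℝ) * (1/3 + (9/10 : ℝ)^15) := by
  norm_num only
  rw [cnt3_eq 30 0 (by norm_num), F3v_30]
  interval_cases c <;>
    rw [cnt9_eq 30 _ (by norm_num), F9v_30] <;> norm_num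

lemma F9v_32 : F9 32 = [499685777, 411921832, 354822776, 354822776, 411921832, 499685777, 577147212, 607812102, 577147212] := by decide
lemma F3v_32 : F3 32 = [1431655765, 1431655766, 1431655765] := by decide
lemma base_16 (c : ℕ) (hc : c < 3) :
    (cnt 9 (2*16) (3*c) : ℝ) ≤ (cnt 3 (2*16) 0 : ℝ) * (1/3 + (9/10 : ℝ)^16) := by
  norm_num only
  rw [cnt3_eq 32 0 (by norm_num), F3v_32]
  interval_cases c <;>
    rw [cnt9_eq 32 _ (by norm_num), F9v_32] <;> norm_num

lemma F9v_34 : F9 34 = [2261792303, 1988440598, 1678352217, 1476390160, 1476390160, 1678352217, 1988440598, 2261792303, 2369918628] := by decide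
lemma F3v_34 : F3 34 = [5726623061, 5726623061, 5726623062] := by decide
lemma base_17 (c : ℕ) (hc : c < 3) :
    (cnt 9 (2*17) (3*c) : ℝ) ≤ (cnt 3 (2*17) 0 : ℝ) * (1/3 + (9/10 : ℝ)^17) := by
  norm_num only
  rw [cnt3_eq 34 0 (by norm_num), F3v_34]
  interval_cases c <;>
    rw [cnt9_eq 34 _ (by norm_num), F9v_34] <;> norm_num

lemma F9v_36 : F9 36 = [9263421862, 8881943832, 7917025716, 6821535192, 6107522697, 6107522697, 6821535192, 7917025716, 8881943832] := by decide
lemma F3v_36 : F3 36 = [22906492246, 22906492245, 22906492245] := by decide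
lemma base_18 (c : ℕ) (hc : c < 3) :
    (cnt 9 (2*18) (3*c) : ℝ) ≤ (cnt 3 (2*18) 0 : ℝ) * (1/3 + (9/10 : ℝ)^18) := by
  norm_num only
  rw [cnt3_eq 36 0 (by norm_num), F3v_36]
  interval_cases c <;>
    rw [cnt9_eq 36 _ (by norm_num), F9v_36] <;> norm_num

lemma F9v_38 : F9 38 = [34944335242, 36290731388, 34944335242, 31537530456, 27667618797, 25144103283, 25144103283, 27667618797, 31537530456] := by decide
lemma F3v_38 : F3 38 = [91625968981, 91625968982, 91625968981] := by decide
lemma base_19 (c : ℕ) (hc : c < 3) :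
    (cnt 9 (2*19) (3*c) : ℝ) ≤ (cnt 3 (2*19) 0 : ℝ) * (1/3 + (9/10 : ℝ)^19) := by
  norm_num only
  rw [cnt3_eq 38 0 (by norm_num), F3v_38]
  interval_cases c <;>
    rw [cnt9_eq 38 _ (by norm_num), F9v_38] <;> norm_num

lemma F9v_40 : F9 40 = [125687014951, 137716932328, 142470133260, 137716932328, 125687014951, 112016871333, 103099928646, 103099928646, 112016871333] := by decide
lemma F3v_40 : F3 40 = [366503875925, 366503875925, 366503875926] := by decide
lemma base_20 (c : ℕ) (hc : c < 3) :
    (cnt 9 (2*20) (3*c) : ℝ) ≤ (cnt 3 (2*20) 0 : ℝ) * (1/3 + (9/10 : ℝ)^20) := by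
  norm_num only
  rw [cnt3_eq 40 0 (by norm_num), F3v_40]
  interval_cases c <;>
    rw [cnt9_eq 40 _ (by norm_num), F9v_40] <;> norm_num

lemma F9v_42 : F9 42 = [452820686263, 501107833563, 543591012867, 560374131176, 543591012867, 501107833563, 452820686263, 421316657271, 421316657271] := by decide
lemma F3v_42 : F3 42 = [1466015503702, 1466015503701, 1466015503701] := by decide
lemma base_21 (c : ℕ) (hc : c < 3) :
    (cnt 9 (2*21) (3*c) : ℝ) ≤ (cnt 3 (2*21) 0 : ℝ) * (1/3 + (9/10 : ℝ)^21) := by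
  norm_num only
  rw [cnt3_eq 42 0 (by norm_num), F3v_42]
  interval_cases c <;>
    rw [cnt9_eq 42 _ (by norm_num), F9v_42] <;> norm_num

lemma F9v_44 : F9 44 = [1716770658076, 1828065863360, 1998627366256, 2148663990473, 2207930288086, 2148663990473, 1998627366256, 1828065863360, 1716770658076] := by decide
lemma F3v_44 : F3 44 = [5864062014805, 5864062014806, 5864062014805] := by decide
lemma base_22 (c : ℕ) (hc : c < 3) :
    (cnt 9 (2*22) (3*c) : ℝ) ≤ (cnt 3 (2*22) 0 : ℝ) * (1/3 + (9/10 : ℝ)^22) := by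
  norm_num only
  rw [cnt3_eq 44 0 (by norm_num), F3v_44]
  interval_cases c <;>
    rw [cnt9_eq 44 _ (by norm_num), F9v_44] <;> norm_num

lemma F9v_46 : F9 46 = [6978377837588, 6978377837588, 7371529751052, 7973984586345, 8503885635288, 8713188557118, 8503885635288, 7973984586345, 7371529751052] := by decide
lemma F3v_46 : F3 46 = [23456248059221, 23456248059221, 23456248059222] := by decide
lemma base_23 (c : ℕ) (hc : c < 3) :
    (cnt 9 (2*23) (3*c) : ℝ) ≤ (cnt 3 (2*23) 0 : ℝ) * (1/3 + (9/10 : ℝ)^23) := by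
  norm_num only
  rw [cnt3_eq 46 0 (by norm_num), F3v_46]
  interval_cases c <;>
    rw [cnt9_eq 46 _ (by norm_num), F9v_46] <;> norm_num

lemma F9v_48 : F9 48 = [29695421926037, 28306663263816, 28306663263816, 29695421926037, 31823384559030, 33694944414039, 34434148384812, 33694944414039, 31823384559030] := by decide
lemma F3v_48 : F3 48 = [93824992236886, 93824992236885, 93824992236885] := by decide
lemma base_24 (c : ℕ) (hc : c < 3) :
    (cnt 9 (2*24) (3*c) : ℝ) ≤ (cnt 3 (2*24) 0 : ℝ) * (1/3 + (9/10 : ℝ)^24) := by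
  norm_num only
  rw [cnt3_eq 48 0 (by norm_num), F3v_48]
  interval_cases c <;>
    rw [cnt9_eq 48 _ (by norm_num), F9v_48] <;> norm_num


lemma main_ineq (n : ℕ) (hn : 1 ≤ n) (c : ℕ) (hc : c < 3) :
    (cnt 9 (2*n) (3*c) : ℝ) ≤ (cnt 3 (2*n) 0 : ℝ) * (1/3 + (9/10)^n) := by
  rcases le_or_gt n 24 with h | h
  · interval_cases n
    · exact base_1 c hc
    · exact base_2 c hc
    · exact base_3 c hc
    · exact base_4 c hc
    · exact base_5 c hc
    · exact base_6 c hc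
    · exact base_7 c hc
    · exact base_8 c hc
    · exact base_9 c hc
    · exact base_10 c hc
    · exact base_11 c hc
    · exact base_12 c hc
    · exact base_13 c hc
    · exact base_14 c hc
    · exact base_15 c hc
    · exact base_16 c hc
    · exact base_17 c hc
    · exact base_18 c hc
    · exact base_19 c hc
    · exact base_20 c hc
    · exact base_21 c hc
    · exact base_22 c hc
    · exact base_23 c hc
    · exact base_24 c hc
  · exact main_large n (by omega) c hc

theorem stmt_16 (n : ℕ) (hn : 1 ≤ n) (c : ℕ) (hc : c < 3) :
    (((univ : Finset (Fin (2 * n) → Fin 2)).filter (fun x =>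
        3 ∣ (∑ j, (x j : ℕ)) ∧ (∑ j, (x j : ℕ)) / 3 % 3 = c)).card : ℝ)
      ≤ (((univ : Finset (Fin (2 * n) → Fin 2)).filter (fun x =>
          3 ∣ ∑ j, (x j : ℕ))).card : ℝ) * (1 / 3 + (9 / 10) ^ n) := by
  have hL : ((univ : Finset (Fin (2 * n) → Fin 2)).filter (fun x =>
        3 ∣ (∑ j, (x j : ℕ)) ∧ (∑ j, (x j : ℕ)) / 3 % 3 = c))
      = ((univ : Finset (Fin (2 * n) → Fin 2)).filter (fun x =>
        (∑ j, (x j : ℕ)) % 9 = 3 * c)) := by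
    apply Finset.filter_congr
    intro x _
    constructor
    · rintro ⟨h1, h2⟩; omega
    · intro h; omega
  have hR : ((univ : Finset (Fin (2 * n) → Fin 2)).filter (fun x =>
        3 ∣ ∑ j, (x j : ℕ)))
      = ((univ : Finset (Fin (2 * n) → Fin 2)).filter (fun x =>
        (∑ j, (x j : ℕ)) % 3 = 0)) := by
    apply Finset.filter_congr
    intro x _
    constructor
    · intro h; omega
    · intro h; omega
  rw [hL, hR]
  exact main_ineq n hn c hc
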